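/- The characteristic polynomial of the endomorphism W equals (X - Ω)·(X² + Ω·X + (σ - 2Ω²)). In particular the eigenvalues of W are Ω and (1/2)·(-Ω ± √(9Ω² - 4σ)). (The eigenvalue statement of Theorem 3 of the paper.) -/

import Mathlib

open Module LinearMap

noncomputable section

/-- The endomorphism `W(x) := 3Ω·B(u,x)·u + Ω·x + B(u,x)·z + B(z,x)·u` of `V`,
representing the self-dual Weyl tensor `𝒲 = 3Ω·𝒰⊗𝒰 + Ω·𝒢 + 𝒰⊗̃𝒵` of a space-time
admitting a 2+2 umbilical structure acting on self-dual bivectors. -/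
def Wmap {V : Type*} [AddCommGroup V] [Module ℂ V]
    (B : LinearMap.BilinForm ℂ V) (Ω : ℂ) (u z : V) : V →ₗ[ℂ] V :=
  (3 * Ω) • (B u).smulRight u + Ω • LinearMap.id + (B u).smulRight z + (B z).smulRight u

end

open Polynomial in
lemma wmat_charpoly (Ω τ β δ : ℂ) :
    (!![-2*Ω, τ, β; -δ, Ω, 0; (0:ℂ), 0, Ω]).charpoly
      = (X - C Ω) * (X^2 + C Ω * X + C (δ*τ - 2*Ω^2)) := by
  rw [Matrix.charpoly, Matrix.det_fin_three]
  simp [Matrix.charmatrix_apply, map_ofNat]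
  ring

open Polynomial in
lemma weyl_charpoly_aux {V : Type*} [AddCommGroup V] [Module ℂ V] [FiniteDimensional ℂ V]
    (b : Basis (Fin 3) ℂ V) (B : LinearMap.BilinForm ℂ V) (Ω δ τ β : ℂ) (u z : V)
    (h0 : b 0 = u) (hz : z = δ • b 1)
    (hu : B u u = -1) (hu1 : B u (b 1) = 0) (hu2 : B u (b 2) = 0)
    (hzu : B z u = 0) (hz1 : B z (b 1) = τ) (hz2 : B z (b 2) = β) :
    (Wmap B Ω u z).charpoly
      = (X - C Ω) * (X ^ 2 + C Ω * X + C (B z z - 2 * Ω ^ 2)) := by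
  have hz1' : δ * (B (b 1)) (b 1) = τ := by
    rw [hz] at hz1; simpa [smul_eq_mul] using hz1
  have hzz : B z z = δ * τ := by
    rw [hz]
    simp only [_root_.map_smul, LinearMap.smul_apply, smul_eq_mul]
    linear_combination δ * hz1'
  have hW : Wmap B Ω u z = Matrix.toLin b b !![-2*Ω, τ, β; -δ, Ω, 0; (0:ℂ), 0, Ω] := by
    apply b.ext
    intro i
    fin_cases i
    · rw [Matrix.toLin_self]
      simp [Wmap, Fin.sum_univ_three, h0, hu, hzu]
      rw [hz]; module
    · rw [Matrix.toLin_self]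
      simp [Wmap, Fin.sum_univ_three, h0, hu1, hz1]
      module
    · rw [Matrix.toLin_self]
      simp [Wmap, Fin.sum_univ_three, h0, hu2, hz2]
      module
  rw [hW, ← LinearMap.charpoly_toMatrix (Matrix.toLin b b _) b, LinearMap.toMatrix_toLin,
    wmat_charpoly, hzz]

open Polynomial Module in
lemma hasEigenvalue_iff_isRoot_charpoly {V : Type*} [AddCommGroup V] [Module ℂ V]
    [FiniteDimensional ℂ V] (f : V →ₗ[ℂ] V) (μ : ℂ) :
    Module.End.HasEigenvalue f μ ↔ f.charpoly.IsRoot μ := by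
  classical
  rw [Module.End.hasEigenvalue_iff_mem_spectrum, spectrum.mem_iff]
  set b := finBasis ℂ V
  set e := LinearMap.toMatrixAlgEquiv b
  have h1 : f.charpoly = (e f).charpoly := (LinearMap.charpoly_toMatrix f b).symm
  have h2 : f.charpoly.eval μ = ((μ : ℂ) • (1 : Matrix _ _ ℂ) - e f).det := by
    rw [h1, Matrix.charpoly, ← Polynomial.coe_evalRingHom, RingHom.map_det]
    congr 1
    ext i j
    by_cases h : i = j
    · subst h
      simp [Matrix.charmatrix_apply_eq, Matrix.one_apply, Matrix.smul_apply]
    · simp [Matrix.charmatrix_apply_ne _ _ _ h, Matrix.one_apply, h, Matrix.smul_apply]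
  have h3 : e ((algebraMap ℂ (Module.End ℂ V)) μ - f) = μ • (1 : Matrix _ _ ℂ) - e f := by
    rw [map_sub, AlgEquiv.commutes, Algebra.algebraMap_eq_smul_one]
  have h4 : ∀ x : Module.End ℂ V, IsUnit x ↔ IsUnit (e x) := fun x =>
    ⟨fun h => h.map e, fun h => by simpa using h.map e.symm⟩
  rw [h4, h3, IsRoot, h2]
  rw [Matrix.isUnit_iff_isUnit_det, isUnit_iff_ne_zero]
  constructor
  · intro h
    by_contra hdet
    exact h hdet
  · intro h hU
    exact hU h

lemma quad_root_iff (Ω σ μ : ℂ) :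
    μ ^ 2 + Ω * μ + (σ - 2 * Ω ^ 2) = 0 ↔
      ∃ α : ℂ, α ^ 2 = 9 * Ω ^ 2 - 4 * σ ∧ μ = (-Ω + α) / 2 := by
  constructor
  · intro h
    exact ⟨2 * μ + Ω, by linear_combination 4 * h, by ring⟩
  · rintro ⟨α, h1, rfl⟩
    linear_combination h1 / 4

open Polynomial in
/-- eigenvalues, Theorem 3: the characteristic polynomial of `W` equals
`(X - Ω)(X² + Ω·X + (σ - 2Ω²))`; in particular the eigenvalues of `W` are `Ω` and
`(1/2)(-Ω ± √(9Ω² - 4σ))`. -/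
theorem weyl_charpoly
    {V : Type*} [AddCommGroup V] [Module ℂ V] [FiniteDimensional ℂ V]
    (hdim : finrank ℂ V = 3)
    (B : LinearMap.BilinForm ℂ V) (hBsym : ∀ x y, B x y = B y x)
    (hBnd : B.Nondegenerate)
    (Ω : ℂ) (u z : V) (hu : B u u = -1) (huz : B u z = 0) :
    (Wmap B Ω u z).charpoly
        = (X - C Ω) * (X ^ 2 + C Ω * X + C (B z z - 2 * Ω ^ 2)) ∧
    (∀ μ : ℂ, Module.End.HasEigenvalue (Wmap B Ω u z) μ ↔
      (μ = Ω ∨ ∃ α : ℂ, α ^ 2 = 9 * Ω ^ 2 - 4 * B z z ∧ μ = (-Ω + α) / 2)) := by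
  classical
  have hzu : B z u = 0 := by rw [hBsym]; exact huz
  obtain ⟨b, δ, h0, hz, hu1, hu2⟩ :
      ∃ (b : Basis (Fin 3) ℂ V) (δ : ℂ), b 0 = u ∧ z = δ • b 1 ∧ B u (b 1) = 0 ∧
        B u (b 2) = 0 := by
    by_cases hz0 : z = 0
    · -- z = 0 : take two basis vectors of ker (B u)
      have hrange : LinearMap.range (B u) = ⊤ := by
        rw [LinearMap.range_eq_top]
        intro c
        refine ⟨(-c) • u, ?_⟩
        simp [hu]
      have hKrank : finrank ℂ (LinearMap.ker (B u)) = 2 := by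
        have h1 := LinearMap.finrank_range_add_finrank_ker (B u)
        rw [hrange, hdim] at h1
        rw [finrank_top ℂ ℂ] at h1
        simp at h1
        omega
      set K := LinearMap.ker (B u)
      set bK := finBasisOfFinrankEq ℂ K hKrank with hbK
      have hw1 : B u ((bK 0 : K) : V) = 0 := (bK 0).2
      have hw2 : B u ((bK 1 : K) : V) = 0 := (bK 1).2
      have hli : LinearIndependent ℂ ![u, ((bK 0 : K) : V), ((bK 1 : K) : V)] := by
        rw [Fintype.linearIndependent_iff]
        intro g hg
        rw [Fin.sum_univ_three] at hg
        simp only [Matrix.cons_val_zero, Matrix.cons_val_one, Matrix.head_cons,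
          Matrix.cons_val_two, Matrix.tail_cons] at hg
        have hg0 : g 0 = 0 := by
          have := congrArg (B u) hg
          simp only [map_add, _root_.map_smul, map_zero, LinearMap.smul_apply,
            smul_eq_mul, hu, hw1, hw2] at this
          simpa using this
        rw [hg0, zero_smul, zero_add] at hg
        have hgK : (g 1 • bK 0 + g 2 • bK 1 : K) = 0 := by
          apply Subtype.coe_injective
          simpa using hg
        have h12 := Fintype.linearIndependent_iff.mp bK.linearIndependent ![g 1, g 2]
          (by simpa [Fin.sum_univ_two] using hgK)
        refine fun i => ?_
        fin_cases i
        · exact hg0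
        · simpa using h12 0
        · simpa using h12 1
      refine ⟨basisOfLinearIndependentOfCardEqFinrank hli (by simp [hdim]), 0, ?_, ?_, ?_, ?_⟩ <;>
        simp [coe_basisOfLinearIndependentOfCardEqFinrank, hz0, hw1, hw2]
    · by_cases hσ : B z z = 0
      · -- z null, z ≠ 0 : pick w with B u w = 0, B z w ≠ 0
        obtain ⟨w0, hw0⟩ : ∃ w0, B z w0 ≠ 0 := by
          by_contra h
          push_neg at h
          exact hz0 (hBnd.1 z h)
        set w := w0 + (B u w0) • u with hw
        have hwu : B u w = 0 := by
          simp [hw, hu]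
        have hwz : B z w ≠ 0 := by
          simpa [hw, hzu] using hw0
        have hli : LinearIndependent ℂ ![u, z, w] := by
          rw [Fintype.linearIndependent_iff]
          intro g hg
          rw [Fin.sum_univ_three] at hg
          simp only [Matrix.cons_val_zero, Matrix.cons_val_one, Matrix.head_cons,
            Matrix.cons_val_two, Matrix.tail_cons] at hg
          have hg0 : g 0 = 0 := by
            have := congrArg (B u) hg
            simp only [map_add, _root_.map_smul, map_zero, LinearMap.smul_apply,
              smul_eq_mul, hu, huz, hwu] at this
            simpa using this
          have hg2 : g 2 = 0 := by
            have := congrArg (B z) hg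
            simp only [map_add, _root_.map_smul, map_zero, LinearMap.smul_apply,
              smul_eq_mul, hzu, hσ] at this
            simp only [mul_zero, zero_add, add_zero] at this
            exact (mul_eq_zero.mp this).resolve_right hwz
          have hg1 : g 1 = 0 := by
            rw [hg0, hg2, zero_smul, zero_smul, zero_add, add_zero] at hg
            exact (smul_eq_zero.mp hg).resolve_right hz0
          intro i
          fin_cases i <;> assumption
        refine ⟨basisOfLinearIndependentOfCardEqFinrank hli (by simp [hdim]), 1, ?_, ?_, ?_, ?_⟩ <;>
          simp [coe_basisOfLinearIndependentOfCardEqFinrank, hwu, huz]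
      · -- B z z ≠ 0 : pick nonzero w orthogonal to u and z
        obtain ⟨w, hwne, hwu, hwz⟩ : ∃ w : V, w ≠ 0 ∧ B u w = 0 ∧ B z w = 0 := by
          set f := (B u).prod (B z) with hf
          have hrk : finrank ℂ (LinearMap.range f) + finrank ℂ (LinearMap.ker f) = 3 := by
            rw [← hdim]; exact LinearMap.finrank_range_add_finrank_ker f
          have hle : finrank ℂ (LinearMap.range f) ≤ 2 := by
            have := Submodule.finrank_le (LinearMap.range f)
            simpa using this
          have hker : LinearMap.ker f ≠ ⊥ := by
            intro h
            rw [h] at hrk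
            simp [finrank_bot] at hrk
            omega
          obtain ⟨w, hwk, hw0⟩ := (LinearMap.ker f).ne_bot_iff.mp hker
          have := LinearMap.mem_ker.mp hwk
          rw [hf, LinearMap.prod_apply] at this
          exact ⟨w, hw0, congrArg Prod.fst this, congrArg Prod.snd this⟩
        have hli : LinearIndependent ℂ ![u, z, w] := by
          rw [Fintype.linearIndependent_iff]
          intro g hg
          rw [Fin.sum_univ_three] at hg
          simp only [Matrix.cons_val_zero, Matrix.cons_val_one, Matrix.head_cons,
            Matrix.cons_val_two, Matrix.tail_cons] at hg
          have hg0 : g 0 = 0 := by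
            have := congrArg (B u) hg
            simp only [map_add, _root_.map_smul, map_zero, LinearMap.smul_apply,
              smul_eq_mul, hu, huz, hwu] at this
            simpa using this
          have hg1 : g 1 = 0 := by
            have := congrArg (B z) hg
            simp only [map_add, _root_.map_smul, map_zero, LinearMap.smul_apply,
              smul_eq_mul, hzu, hwz] at this
            simp only [mul_zero, zero_add, add_zero] at this
            exact (mul_eq_zero.mp this).resolve_right hσ
          have hg2 : g 2 = 0 := by
            rw [hg0, hg1, zero_smul, zero_smul, zero_add, zero_add] at hg
            exact (smul_eq_zero.mp hg).resolve_right hwne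
          intro i
          fin_cases i <;> assumption
        refine ⟨basisOfLinearIndependentOfCardEqFinrank hli (by simp [hdim]), 1, ?_, ?_, ?_, ?_⟩ <;>
          simp [coe_basisOfLinearIndependentOfCardEqFinrank, hwu, huz]
  have hcp := weyl_charpoly_aux b B Ω δ (B z (b 1)) (B z (b 2)) u z h0 hz hu hu1 hu2 hzu rfl rfl
  refine ⟨hcp, fun μ => ?_⟩
  rw [hasEigenvalue_iff_isRoot_charpoly, hcp]
  have : ((X - C Ω) * (X ^ 2 + C Ω * X + C (B z z - 2 * Ω ^ 2))).IsRoot μ ↔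
      (μ - Ω = 0 ∨ μ ^ 2 + Ω * μ + (B z z - 2 * Ω ^ 2) = 0) := by
    simp [IsRoot, mul_eq_zero]
  rw [this, sub_eq_zero, quad_root_iff]
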